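/- Let X be a regular module over a commutative unital regular ring A with complete Boolean algebra of idempotents. Then for every x ∈ X: (i) s(x)·x = x; (ii) if e is an idempotent with e·x = x then s(x) ≤ e; (iii) s(a·x) = s(a)·s(x) for every a ∈ A. -/

import Mathlib

namespace LCRA

/-- `A` is a (commutative, unital) von Neumann regular ring. -/
def IsRegularRing (A : Type*) [CommRing A] : Prop :=
  ∀ a : A, ∃ b, a * a * b = a

/-- `m` is the supremum of the set `L` of idempotents with respect to the
order `e ≤ f ↔ e * f = e`. -/
def IsIdemSup {A : Type*} [CommRing A] (m : A) (L : Set A) : Prop :=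
  IsIdempotentElem m ∧ (∀ e ∈ L, e * m = e) ∧
    ∀ g : A, IsIdempotentElem g → (∀ e ∈ L, e * g = e) → m * g = m

/-- The Boolean algebra of idempotents of `A` is complete. -/
def IdemComplete (A : Type*) [CommRing A] : Prop :=
  ∀ L : Set A, (∀ e ∈ L, IsIdempotentElem e) → ∃ m, IsIdemSup m L

/-- A partition of unity: pairwise disjoint idempotents with supremum `1`. -/
def IsPartitionOfUnity {A : Type*} [CommRing A] {ι : Type*} (e : ι → A) : Prop :=
  (∀ i, IsIdempotentElem (e i)) ∧ (∀ i j, i ≠ j → e i * e j = 0) ∧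
    IsIdemSup (1 : A) (Set.range e)

/-- `A` is laterally complete: its Boolean algebra of idempotents is complete and
every pairwise disjoint family `{a i}` admits `b` with `b * s(a i) = a i`, where the
support `s(a i)` is `a i * c` for any quasi-inverse `c` of `a i`. -/
def RingLaterallyComplete (A : Type*) [CommRing A] : Prop :=
  IdemComplete A ∧
    ∀ (ι : Type) (a : ι → A), (∀ i j, i ≠ j → a i * a j = 0) →
      ∃ b : A, ∀ i, ∀ c : A, a i * a i * c = a i → b * (a i * c) = a i

/-- A regular `A`-module: if `e • x = 0` for all `e` in a set `L` of idempotents,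
then `(sup L) • x = 0`. -/
def IsRegularModule (A X : Type*) [CommRing A] [AddCommGroup X] [Module A X] : Prop :=
  ∀ (x : X) (L : Set A) (m : A), (∀ e ∈ L, IsIdempotentElem e) →
    IsIdemSup m L → (∀ e ∈ L, e • x = 0) → m • x = 0

/-- A laterally complete `A`-module: every family can be mixed along any partition of unity. -/
def ModuleLaterallyComplete (A X : Type*) [CommRing A] [AddCommGroup X] [Module A X] : Prop :=
  ∀ (ι : Type) (e : ι → A) (y : ι → X), IsPartitionOfUnity e →
    ∃ x : X, ∀ i, e i • x = e i • y i

/-- The cyclic hull `mix(E)` of a subset `E` of an `A`-module `X`. -/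
def mixSet (A : Type*) {X : Type*} [CommRing A] [AddCommGroup X] [Module A X]
    (E : Set X) : Set X :=
  {x | ∃ (ι : Type) (e : ι → A) (y : ι → X),
    IsPartitionOfUnity e ∧ (∀ i, y i ∈ E) ∧ ∀ i, e i • x = e i • y i}

/-- The set `K(∇)` of step elements: finite `K`-linear combinations of idempotents. -/
def StepSet (K A : Type*) [CommSemiring K] [CommRing A] [Algebra K A] : Set A :=
  {x | ∃ (n : ℕ) (l : Fin n → K) (e : Fin n → A),
    (∀ k, IsIdempotentElem (e k)) ∧ x = ∑ k, l k • e k}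

end LCRA

namespace LCRA
/-- Properties of the support of an element of a regular module:
`s(x) • x = x`; `s(x)` is below any idempotent fixing `x`; and
`s(a • x) = s(a) * s(x)`. Here `1 - s(x)` is the supremum of the idempotents
annihilating `x`, and `s(a) = a * i(a)`. -/
theorem stmt_11 {A X : Type*} [CommRing A] [AddCommGroup X] [Module A X]
    (hreg : IsRegularRing A) (hcomp : IdemComplete A)
    (i : A → A) (hi : ∀ a : A, a * a * i a = a ∧ a * i a * i a = i a)
    (hXreg : IsRegularModule A X)
    (x : X) (a : A) (sx sax : A)
    (hsx : IsIdemSup (1 - sx) {e : A | IsIdempotentElem e ∧ e • x = 0})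
    (hsax : IsIdemSup (1 - sax) {e : A | IsIdempotentElem e ∧ e • (a • x) = 0}) :
    sx • x = x ∧
    (∀ e : A, IsIdempotentElem e → e • x = x → sx * e = sx) ∧
    sax = (a * i a) * sx := by

  have hi1 := (hi a).1
  set p := a * i a with hpdef
  have hp : p * p = p := by linear_combination i a * hi1
  have hsxi : sx * sx = sx := by
    have h := hsx.1; unfold IsIdempotentElem at h; linear_combination h
  -- (i)
  have h0 : (1 - sx) • x = 0 :=
    hXreg x _ (1 - sx) (fun e he => he.1) hsx (fun e he => he.2)
  have hfix : sx • x = x := by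
    have h := h0
    rw [sub_smul, one_smul, sub_eq_zero] at h
    exact h.symm
  refine ⟨hfix, ?_, ?_⟩
  · intro e he hex
    have h1e : IsIdempotentElem (1 - e) := he.one_sub
    have h1ex : (1 - e) • x = 0 := by rw [sub_smul, one_smul, hex, sub_self]
    have h := hsx.2.1 (1 - e) ⟨h1e, h1ex⟩
    linear_combination h
  · -- sax = p * sx
    have hM : IsIdemSup (1 - p * sx) {e : A | IsIdempotentElem e ∧ e • (a • x) = 0} := by
      refine ⟨?_, ?_, ?_⟩
      · show (1 - p * sx) * (1 - p * sx) = 1 - p * sx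
        linear_combination sx * sx * hp + p * hsxi
      · rintro e ⟨heid, hex⟩
        have hq0 : (e * p) • x = 0 := by
          have : (e * a) • x = 0 := by rw [mul_smul]; exact hex
          calc (e * p) • x = i a • ((e * a) • x) := by
                rw [← mul_smul, hpdef]; ring_nf
          _ = 0 := by rw [this, smul_zero]
        have hqid : IsIdempotentElem (e * p) := by
          show (e * p) * (e * p) = e * p
          unfold IsIdempotentElem at heid
          linear_combination p * p * heid + e * hp
        have h := hsx.2.1 (e * p) ⟨hqid, hq0⟩
        linear_combination h
      · intro g hgid hg
        have h1p : (1 - p) • (a • x) = 0 := by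
          rw [← mul_smul]
          have : (1 - p) * a = 0 := by linear_combination -hi1
          rw [this, zero_smul]
        have h1pid : IsIdempotentElem (1 - p) := by
          show (1 - p) * (1 - p) = 1 - p; linear_combination hp
        have hA := hg (1 - p) ⟨h1pid, h1p⟩
        have h1s : (1 - sx) • (a • x) = 0 := by
          rw [← mul_smul, mul_comm, mul_smul, h0, smul_zero]
        have hB := hg (1 - sx) ⟨hsx.1, h1s⟩
        linear_combination p * hB + hA
    have hmid : IsIdempotentElem (1 - p * sx) := hM.1
    have h1 := hsax.2.2 (1 - p * sx) hmid hM.2.1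
    have h2 := hM.2.2 (1 - sax) hsax.1 hsax.2.1
    linear_combination h1 - h2


end LCRA
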